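/- Let n > g ≥ 3 with g odd. The Laplacian spectral radius of the unicyclic graph U_{n,g} equals the Laplacian spectral radius of the tree \overline{U}_{n,g} obtained from U_{n,g} by deleting the cycle edge {(g-1)/2, (g+1)/2}: λ(U_{n,g}) = λ(\overline{U}_{n,g}). -/

import Mathlib

open Matrix

/-- The unicyclic graph `U_{n,g}` on vertices `0, …, n-1` (vertex `i` here is
vertex `i+1` of the paper): a cycle on `0, …, g-1` together with a pendant path
`g-1, g, …, n-1` attached at the cycle vertex `g-1`. -/
def Ung (n g : ℕ) : SimpleGraph (Fin n) :=
  SimpleGraph.fromRel (fun a b => b.val = a.val + 1 ∨ (a.val = 0 ∧ b.val = g - 1))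

instance (n g : ℕ) : DecidableRel (Ung n g).Adj := fun a b =>
  decidable_of_iff _ (SimpleGraph.fromRel_adj _ a b).symm

/-- The tree `\overline{U}_{n,g}` (for `g` odd): `U_{n,g}` with the cycle edge
between the paper vertices `(g-1)/2` and `(g+1)/2` (here the consecutive edge
whose larger endpoint `b` satisfies `2b + 1 = g`) deleted. -/
def UngBar (n g : ℕ) : SimpleGraph (Fin n) :=
  SimpleGraph.fromRel (fun a b =>
    (b.val = a.val + 1 ∧ 2 * b.val + 1 ≠ g) ∨ (a.val = 0 ∧ b.val = g - 1))

instance (n g : ℕ) : DecidableRel (UngBar n g).Adj := fun a b =>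
  decidable_of_iff _ (SimpleGraph.fromRel_adj _ a b).symm


lemma lap_mulVec {V : Type*} [Fintype V] [DecidableEq V] (G : SimpleGraph V)
    [DecidableRel G.Adj] (w : V → ℝ) (i : V) :
    (G.lapMatrix ℝ *ᵥ w) i = ∑ j, if G.Adj i j then w i - w j else 0 := by
  rw [SimpleGraph.lapMatrix_mulVec_apply]
  have hdeg : (G.degree i : ℝ) = ∑ j, if G.Adj i j then 1 else 0 :=
    G.degree_eq_sum_if_adj i
  rw [hdeg, Finset.sum_mul]
  have : ∑ u ∈ G.neighborFinset i, w u = ∑ j, if G.Adj i j then w j else 0 := by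
    rw [SimpleGraph.neighborFinset_eq_filter, Finset.sum_filter]
  rw [this, ← Finset.sum_sub_distrib]
  exact Finset.sum_congr rfl fun j _ => by split_ifs <;> simp

lemma ung_adj {n g : ℕ} {a b : Fin n} :
    (Ung n g).Adj a b ↔ a.val ≠ b.val ∧ (b.val = a.val + 1 ∨ a.val = b.val + 1 ∨
      (a.val = 0 ∧ b.val = g - 1) ∨ (b.val = 0 ∧ a.val = g - 1)) := by
  simp only [Ung, SimpleGraph.fromRel_adj, ne_eq, Fin.ext_iff]
  tauto

lemma ungbar_adj {n g : ℕ} {a b : Fin n} :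
    (UngBar n g).Adj a b ↔ a.val ≠ b.val ∧ ((b.val = a.val + 1 ∧ 2 * b.val + 1 ≠ g) ∨
      (a.val = b.val + 1 ∧ 2 * a.val + 1 ≠ g) ∨
      (a.val = 0 ∧ b.val = g - 1) ∨ (b.val = 0 ∧ a.val = g - 1)) := by
  simp only [UngBar, SimpleGraph.fromRel_adj, ne_eq, Fin.ext_iff]
  tauto

lemma ungbar_le_ung {n g : ℕ} (i j : Fin n) (h : (UngBar n g).Adj i j) :
    (Ung n g).Adj i j := by
  rw [ungbar_adj] at h
  rw [ung_adj]
  omega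

/-- The reflection of the cycle part of `Ung n g`. -/
def tauF {n : ℕ} (g : ℕ) (i : Fin n) : Fin n :=
  if h : i.val ≤ g - 2 ∧ g - 2 < n then ⟨g - 2 - i.val, by omega⟩ else i

lemma tauF_val {n g : ℕ} (hgn : g - 2 < n) (i : Fin n) :
    (tauF g i).val = if i.val ≤ g - 2 then g - 2 - i.val else i.val := by
  unfold tauF
  rcases le_or_gt i.val (g - 2) with h | h
  · rw [dif_pos ⟨h, hgn⟩, if_pos h]
  · rw [dif_neg (by omega), if_neg (by omega)]

lemma tauF_invol {n g : ℕ} (hgn : g - 2 < n) (i : Fin n) : tauF g (tauF g i) = i := by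
  apply Fin.ext
  rw [tauF_val hgn, tauF_val hgn i]
  split_ifs <;> omega

lemma adj_tauF {n g : ℕ} (hg : 3 ≤ g) (hng : g < n) (i j : Fin n) :
    (Ung n g).Adj (tauF g i) (tauF g j) ↔ (Ung n g).Adj i j := by
  have hgn : g - 2 < n := by omega
  rw [ung_adj, ung_adj, tauF_val hgn, tauF_val hgn]
  have hi := i.isLt
  have hj := j.isLt
  split_ifs <;> omega

lemma lap_comm_tauF {n g : ℕ} (hg : 3 ≤ g) (hng : g < n) (x : Fin n → ℝ) (i : Fin n) :
    ((Ung n g).lapMatrix ℝ *ᵥ fun j => x (tauF g j)) i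
      = ((Ung n g).lapMatrix ℝ *ᵥ x) (tauF g i) := by
  have hgn : g - 2 < n := by omega
  rw [lap_mulVec, lap_mulVec]
  rw [← Equiv.sum_comp (Function.Involutive.toPerm (tauF g) (tauF_invol hgn))
    (fun j => if (Ung n g).Adj (tauF g i) j then x (tauF g i) - x j else 0)]
  refine Finset.sum_congr rfl fun j _ => ?_
  exact (if_congr (adj_tauF hg hng i j) rfl rfl).symm

lemma pair_of_adj_not_adj {n g k : ℕ} (hg : 3 ≤ g) (hng : g < n) (hk : g = 2 * k + 1)
    (i j : Fin n) (hU : (Ung n g).Adj i j) (hB : ¬ (UngBar n g).Adj i j) :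
    (i.val = k - 1 ∧ j.val = k) ∨ (i.val = k ∧ j.val = k - 1) := by
  rw [ung_adj] at hU
  rw [ungbar_adj] at hB
  omega

lemma anti_bound {n g : ℕ} (hg : 3 ≤ g) (hng : g < n) {lam : ℝ} {x : Fin n → ℝ}
    (hx0 : x ≠ 0) (hxeig : (Ung n g).lapMatrix ℝ *ᵥ x = lam • x)
    (hzero : ∀ i : Fin n, g - 2 < i.val → x i = 0) : lam ≤ 4 := by
  obtain ⟨i₀, -, hmax⟩ := Finset.exists_max_image Finset.univ (fun i => |x i|)
    ⟨(⟨0, by omega⟩ : Fin n), Finset.mem_univ _⟩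
  simp only [Finset.mem_univ, forall_const] at hmax
  have hxi0 : x i₀ ≠ 0 := by
    intro h0
    apply hx0
    funext j
    have h1 := hmax j
    rw [h0, abs_zero] at h1
    have h2 := abs_nonneg (x j)
    have : |x j| = 0 := le_antisymm h1 h2
    simpa [abs_eq_zero] using this
  have hi0le : i₀.val ≤ g - 2 := by
    by_contra h
    exact hxi0 (hzero i₀ (by omega))
  set a : Fin n := if i₀.val = 0 then (⟨1, by omega⟩ : Fin n)
    else ⟨i₀.val - 1, by omega⟩ with ha_def
  set b : Fin n := if i₀.val = 0 then (⟨g - 1, by omega⟩ : Fin n)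
    else ⟨i₀.val + 1, by omega⟩ with hb_def
  have hav : a.val = if i₀.val = 0 then 1 else i₀.val - 1 := by
    rw [ha_def]; split_ifs <;> rfl
  have hbv : b.val = if i₀.val = 0 then g - 1 else i₀.val + 1 := by
    rw [hb_def]; split_ifs <;> rfl
  have hab : a ≠ b := by
    intro h
    have := congrArg Fin.val h
    rw [hav, hbv] at this
    split_ifs at this <;> omega
  have hnbr : ∀ j : Fin n, (Ung n g).Adj i₀ j ↔ j = a ∨ j = b := by
    intro j
    rw [ung_adj, show (j = a ↔ j.val = a.val) from Fin.ext_iff,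
      show (j = b ↔ j.val = b.val) from Fin.ext_iff, hav, hbv]
    have hj := j.isLt
    have hi := i₀.isLt
    split_ifs <;> omega
  have heq : lam * x i₀ = (x i₀ - x a) + (x i₀ - x b) := by
    have h1 := congrFun hxeig i₀
    rw [lap_mulVec] at h1
    have h2 : ∀ j : Fin n, (if (Ung n g).Adj i₀ j then x i₀ - x j else 0)
        = (if j = a then x i₀ - x a else 0) + (if j = b then x i₀ - x b else 0) := by
      intro j
      by_cases hja : j = a
      · subst hja
        rw [if_pos ((hnbr a).mpr (Or.inl rfl)), if_pos rfl, if_neg hab]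
        ring
      · by_cases hjb : j = b
        · subst hjb
          rw [if_pos ((hnbr b).mpr (Or.inr rfl)), if_neg hja, if_pos rfl]
          ring
        · rw [if_neg (fun h => by rcases (hnbr j).mp h with h' | h' <;> tauto),
            if_neg hja, if_neg hjb]
          ring
    rw [Finset.sum_congr rfl fun j _ => h2 j, Finset.sum_add_distrib,
      Finset.sum_ite_eq' Finset.univ a, Finset.sum_ite_eq' Finset.univ b] at h1
    simp only [Finset.mem_univ, if_true, Pi.smul_apply, smul_eq_mul] at h1
    linarith
  have habs : |lam| * |x i₀| ≤ 4 * |x i₀| := by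
    rw [← abs_mul, heq]
    have h1 := hmax a
    have h2 := hmax b
    calc |(x i₀ - x a) + (x i₀ - x b)| ≤ |x i₀ - x a| + |x i₀ - x b| := abs_add_le _ _
      _ ≤ (|x i₀| + |x a|) + (|x i₀| + |x b|) := by gcongr <;> exact abs_sub _ _
      _ ≤ 4 * |x i₀| := by linarith
  have h4 : |lam| ≤ 4 := le_of_mul_le_mul_right habs (abs_pos.mpr hxi0)
  linarith [le_abs_self lam]


section AuxSpec

variable {m : ℕ}

lemma exists_eigvec {A : Matrix (Fin m) (Fin m) ℝ} {t : ℝ}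
    (h : t ∈ spectrum ℝ A) : ∃ x : Fin m → ℝ, x ≠ 0 ∧ A *ᵥ x = t • x := by
  rw [← AlgEquiv.spectrum_eq (Matrix.toLinAlgEquiv' (R := ℝ) (n := Fin m)) A,
    ← Module.End.hasEigenvalue_iff_mem_spectrum] at h
  obtain ⟨v, hv⟩ := h.exists_hasEigenvector
  refine ⟨v, hv.2, ?_⟩
  have := hv.apply_eq_smul
  rwa [Matrix.toLinAlgEquiv'_apply] at this

lemma mem_spectrum_of_eigvec {A : Matrix (Fin m) (Fin m) ℝ} {t : ℝ} {x : Fin m → ℝ}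
    (hx : x ≠ 0) (h : A *ᵥ x = t • x) : t ∈ spectrum ℝ A := by
  rw [← AlgEquiv.spectrum_eq (Matrix.toLinAlgEquiv' (R := ℝ) (n := Fin m)) A,
    ← Module.End.hasEigenvalue_iff_mem_spectrum]
  exact Module.End.hasEigenvalue_of_hasEigenvector
    ⟨Module.End.mem_eigenspace_iff.mpr (by rw [Matrix.toLinAlgEquiv'_apply, h]), hx⟩

lemma rayleigh_le {A : Matrix (Fin m) (Fin m) ℝ} (hA : A.IsHermitian) {t : ℝ}
    (ht : ∀ μ ∈ spectrum ℝ A, μ ≤ t) (x : Fin m → ℝ) :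
    x ⬝ᵥ A *ᵥ x ≤ t * (x ⬝ᵥ x) := by
  set V : Matrix (Fin m) (Fin m) ℝ := (hA.eigenvectorUnitary : Matrix (Fin m) (Fin m) ℝ) with hV
  have hstar : star V = Vᵀ := by
    ext i j; simp [Matrix.star_apply]
  have hunit : V * Vᵀ = 1 := by
    rw [← hstar]; exact Matrix.mem_unitaryGroup_iff.mp hA.eigenvectorUnitary.2
  have hd : (RCLike.ofReal ∘ hA.eigenvalues : Fin m → ℝ) = hA.eigenvalues := by
    funext i; simp
  have hzz : (Vᵀ *ᵥ x) ⬝ᵥ (Vᵀ *ᵥ x) = x ⬝ᵥ x := by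
    nth_rewrite 1 [Matrix.mulVec_transpose]
    rw [← Matrix.dotProduct_mulVec, Matrix.mulVec_mulVec, hunit, Matrix.one_mulVec]
  have hAx : x ⬝ᵥ A *ᵥ x = ∑ i, hA.eigenvalues i * ((Vᵀ *ᵥ x) i * (Vᵀ *ᵥ x) i) := by
    conv_lhs => rw [hA.spectral_theorem, Unitary.conjStarAlgAut_apply, ← hV, hstar, hd]
    rw [← Matrix.mulVec_mulVec, ← Matrix.mulVec_mulVec, Matrix.dotProduct_mulVec,
      ← Matrix.mulVec_transpose]
    simp only [Matrix.mulVec_diagonal, dotProduct]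
    exact Finset.sum_congr rfl fun i _ => by ring
  rw [hAx, ← hzz]
  calc ∑ i, hA.eigenvalues i * ((Vᵀ *ᵥ x) i * (Vᵀ *ᵥ x) i)
      ≤ ∑ i, t * ((Vᵀ *ᵥ x) i * (Vᵀ *ᵥ x) i) := by
        refine Finset.sum_le_sum fun i _ => ?_
        exact mul_le_mul_of_nonneg_right (ht _ (hA.eigenvalues_mem_spectrum_real i))
          (mul_self_nonneg _)
    _ = t * ((Vᵀ *ᵥ x) ⬝ᵥ (Vᵀ *ᵥ x)) := by rw [dotProduct, Finset.mul_sum]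

lemma dot_self_pos {x : Fin m → ℝ} (hx : x ≠ 0) : 0 < x ⬝ᵥ x := by
  obtain ⟨i, hi⟩ := Function.ne_iff.mp hx
  calc (0:ℝ) < x i * x i := mul_self_pos.mpr hi
    _ ≤ ∑ j, x j * x j :=
        Finset.single_le_sum (fun j _ => mul_self_nonneg (x j)) (Finset.mem_univ i)

end AuxSpec

set_option maxHeartbeats 1000000 in
lemma four_le_lam' {n g : ℕ} (hg : 3 ≤ g) (hng : g < n) {lam' : ℝ}
    (hlam' : IsGreatest (spectrum ℝ ((UngBar n g).lapMatrix ℝ)) lam') : (4:ℝ) ≤ lam' := by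
  set c : Fin n := ⟨g - 1, by omega⟩ with hc_def
  set w1 : Fin n := ⟨g - 2, by omega⟩ with hw1_def
  set w2 : Fin n := ⟨0, by omega⟩ with hw2_def
  set w3 : Fin n := ⟨g, hng⟩ with hw3_def
  have hcv : c.val = g - 1 := rfl
  have hw1v : w1.val = g - 2 := rfl
  have hw2v : w2.val = 0 := rfl
  have hw3v : w3.val = g := rfl
  have hne1 : c ≠ w1 := fun h => by have := congrArg Fin.val h; omega
  have hne2 : c ≠ w2 := fun h => by have := congrArg Fin.val h; omega
  have hne3 : c ≠ w3 := fun h => by have := congrArg Fin.val h; omega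
  have hne4 : w1 ≠ w2 := fun h => by have := congrArg Fin.val h; omega
  have hne5 : w1 ≠ w3 := fun h => by have := congrArg Fin.val h; omega
  have hne6 : w2 ≠ w3 := fun h => by have := congrArg Fin.val h; omega
  set y : Fin n → ℝ := fun i =>
    if i = c then 3 else if i = w1 ∨ i = w2 ∨ i = w3 then -1 else 0 with hy_def
  have hyc : y c = 3 := by rw [hy_def]; simp
  have hyw1 : y w1 = -1 := by rw [hy_def]; simp [Ne.symm hne1]
  have hyw2 : y w2 = -1 := by rw [hy_def]; simp [Ne.symm hne2, Ne.symm hne4]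
  have hyw3 : y w3 = -1 := by
    rw [hy_def]; simp [Ne.symm hne3, Ne.symm hne5, Ne.symm hne6]
  have hyy : y ⬝ᵥ y = 12 := by
    have hpt : ∀ i : Fin n, y i * y i = (if i = c then (9:ℝ) else 0)
        + (if i = w1 then 1 else 0) + (if i = w2 then 1 else 0)
        + (if i = w3 then 1 else 0) := by
      intro i
      by_cases h1 : i = c
      · subst h1; rw [hyc]; norm_num [hne1, hne2, hne3]
      · by_cases h2 : i = w1
        · subst h2; rw [hyw1]; norm_num [h1, hne4, hne5]
        · by_cases h3 : i = w2
          · subst h3; rw [hyw2]; norm_num [h1, h2, hne6]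
          · by_cases h4 : i = w3
            · subst h4; rw [hyw3]; norm_num [h1, h2, h3]
            · have hy0 : y i = 0 := by rw [hy_def]; simp [h1, h2, h3, h4]
              rw [hy0]; norm_num [h1, h2, h3, h4]
    rw [dotProduct, Finset.sum_congr rfl fun i _ => hpt i]
    simp only [Finset.sum_add_distrib, Finset.sum_ite_eq' Finset.univ,
      Finset.mem_univ, if_true]
    norm_num
  have hadj1 : (UngBar n g).Adj c w1 := by rw [ungbar_adj]; omega
  have hadj2 : (UngBar n g).Adj w2 c := by rw [ungbar_adj]; omega
  have hadj3 : (UngBar n g).Adj c w3 := by rw [ungbar_adj]; omega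
  have hquad : (48:ℝ) ≤ y ⬝ᵥ (UngBar n g).lapMatrix ℝ *ᵥ y := by
    rw [← Matrix.toLinearMap₂'_apply', SimpleGraph.lapMatrix_toLinearMap₂',
      le_div_iff₀ (by norm_num : (0:ℝ) < 2)]
    rw [← Finset.sum_product']
    set F : Fin n × Fin n → ℝ :=
      fun p => if (UngBar n g).Adj p.1 p.2 then (y p.1 - y p.2)^2 else 0 with hF_def
    have hF1 : F (c, w1) = 16 := by simp only [hF_def]; rw [if_pos hadj1, hyc, hyw1]; norm_num
    have hF2 : F (w1, c) = 16 := by simp only [hF_def]; rw [if_pos hadj1.symm, hyc, hyw1]; norm_num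
    have hF3 : F (c, w2) = 16 := by simp only [hF_def]; rw [if_pos hadj2.symm, hyc, hyw2]; norm_num
    have hF4 : F (w2, c) = 16 := by simp only [hF_def]; rw [if_pos hadj2, hyc, hyw2]; norm_num
    have hF5 : F (c, w3) = 16 := by simp only [hF_def]; rw [if_pos hadj3, hyc, hyw3]; norm_num
    have hF6 : F (w3, c) = 16 := by simp only [hF_def]; rw [if_pos hadj3.symm, hyc, hyw3]; norm_num
    have nes : c ≠ w1 ∧ c ≠ w2 ∧ c ≠ w3 ∧ w1 ≠ w2 ∧ w1 ≠ w3 ∧ w2 ≠ w3 ∧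
        w1 ≠ c ∧ w2 ≠ c ∧ w3 ≠ c ∧ w2 ≠ w1 ∧ w3 ≠ w1 ∧ w3 ≠ w2 :=
      ⟨hne1, hne2, hne3, hne4, hne5, hne6, Ne.symm hne1, Ne.symm hne2, Ne.symm hne3,
        Ne.symm hne4, Ne.symm hne5, Ne.symm hne6⟩
    obtain ⟨n1, n2, n3, n4, n5, n6, n7, n8, n9, n10, n11, n12⟩ := nes
    have hm5 : ((c, w3) : Fin n × Fin n) ∉ ({(w3, c)} : Finset (Fin n × Fin n)) := by
      simp [n1, n2, n3, n4, n5, n6, n7, n8, n9, n10, n11, n12]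
    have hm4 : ((w2, c) : Fin n × Fin n) ∉ ({(c, w3), (w3, c)} : Finset (Fin n × Fin n)) := by
      simp [n1, n2, n3, n4, n5, n6, n7, n8, n9, n10, n11, n12]
    have hm3 : ((c, w2) : Fin n × Fin n) ∉
        ({(w2, c), (c, w3), (w3, c)} : Finset (Fin n × Fin n)) := by
      simp [n1, n2, n3, n4, n5, n6, n7, n8, n9, n10, n11, n12]
    have hm2 : ((w1, c) : Fin n × Fin n) ∉
        ({(c, w2), (w2, c), (c, w3), (w3, c)} : Finset (Fin n × Fin n)) := by
      simp [n1, n2, n3, n4, n5, n6, n7, n8, n9, n10, n11, n12]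
    have hm1 : ((c, w1) : Fin n × Fin n) ∉
        ({(w1, c), (c, w2), (w2, c), (c, w3), (w3, c)} : Finset (Fin n × Fin n)) := by
      simp [n1, n2, n3, n4, n5, n6, n7, n8, n9, n10, n11, n12]
    have hS : ∑ p ∈ ({(c, w1), (w1, c), (c, w2), (w2, c), (c, w3), (w3, c)} :
        Finset (Fin n × Fin n)), F p = 96 := by
      rw [Finset.sum_insert hm1, Finset.sum_insert hm2, Finset.sum_insert hm3,
        Finset.sum_insert hm4, Finset.sum_insert hm5, Finset.sum_singleton]
      rw [hF1, hF2, hF3, hF4, hF5, hF6]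
      norm_num
    calc (48:ℝ) * 2 = 96 := by norm_num
      _ = ∑ p ∈ ({(c, w1), (w1, c), (c, w2), (w2, c), (c, w3), (w3, c)} :
            Finset (Fin n × Fin n)), F p := hS.symm
      _ ≤ ∑ p ∈ Finset.univ ×ˢ Finset.univ, F p := by
          apply Finset.sum_le_sum_of_subset_of_nonneg
          · rw [Finset.univ_product_univ]
            exact Finset.subset_univ _
          · intro p _ _
            simp only [hF_def]
            positivity
  have hray := rayleigh_le (SimpleGraph.posSemidef_lapMatrix ℝ (UngBar n g)).1
    (fun μ hμ => hlam'.2 hμ) y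
  rw [hyy] at hray
  nlinarith


set_option maxHeartbeats 1000000 in
theorem stmt_19 (n g : ℕ) (hg : 3 ≤ g) (hodd : Odd g) (hng : g < n)
    (lam lam' : ℝ)
    (hlam : IsGreatest (spectrum ℝ ((Ung n g).lapMatrix ℝ)) lam)
    (hlam' : IsGreatest (spectrum ℝ ((UngBar n g).lapMatrix ℝ)) lam') :
    lam = lam' := by
  obtain ⟨k, hk⟩ := hodd
  have hk1 : 1 ≤ k := by omega
  have hgn : g - 2 < n := by omega
  -- lam' ≤ lam
  have hle1 : lam' ≤ lam := by
    obtain ⟨y, hy0, hyeig⟩ := exists_eigvec hlam'.1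
    have hmono : y ⬝ᵥ (UngBar n g).lapMatrix ℝ *ᵥ y ≤ y ⬝ᵥ (Ung n g).lapMatrix ℝ *ᵥ y := by
      rw [← Matrix.toLinearMap₂'_apply', ← Matrix.toLinearMap₂'_apply',
        SimpleGraph.lapMatrix_toLinearMap₂', SimpleGraph.lapMatrix_toLinearMap₂']
      gcongr with i _ j _
      by_cases hB : (UngBar n g).Adj i j
      · simp [hB, ungbar_le_ung i j hB]
      · simp only [hB, if_false]
        positivity
    have h1 : y ⬝ᵥ (UngBar n g).lapMatrix ℝ *ᵥ y = lam' * (y ⬝ᵥ y) := by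
      rw [hyeig, dotProduct_smul, smul_eq_mul]
    have h3 := rayleigh_le (SimpleGraph.posSemidef_lapMatrix ℝ (Ung n g)).1
      (fun μ hμ => hlam.2 hμ) y
    have hq := dot_self_pos hy0
    have := hmono.trans h3
    rw [h1] at this
    exact le_of_mul_le_mul_right this hq
  -- symmetrised eigenvector
  obtain ⟨x, hx0, hxeig⟩ := exists_eigvec hlam.1
  set s : Fin n → ℝ := fun i => x i + x (tauF g i) with hs_def
  have hseig : (Ung n g).lapMatrix ℝ *ᵥ s = lam • s := by
    funext i
    have h1 : ((Ung n g).lapMatrix ℝ *ᵥ s) i = ((Ung n g).lapMatrix ℝ *ᵥ x) i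
        + ((Ung n g).lapMatrix ℝ *ᵥ fun j => x (tauF g j)) i := by
      rw [show s = x + fun j => x (tauF g j) from rfl, Matrix.mulVec_add]
      rfl
    rw [h1, lap_comm_tauF hg hng, hxeig]
    simp only [hs_def, Pi.smul_apply, smul_eq_mul]
    ring
  rcases eq_or_ne s 0 with hs | hs
  · -- antisymmetric eigenvector
    have hzero : ∀ i : Fin n, g - 2 < i.val → x i = 0 := by
      intro i hi
      have hfix : tauF g i = i := by
        apply Fin.ext
        rw [tauF_val hgn]
        rw [if_neg (by omega)]
      have h0 := congrFun hs i
      simp only [hs_def, hfix, Pi.zero_apply] at h0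
      linarith
    have h4 := anti_bound hg hng hx0 hxeig hzero
    have h4' := four_le_lam' hg hng hlam'
    exact le_antisymm (by linarith) hle1
  · -- symmetric eigenvector
    set p : Fin n := ⟨k - 1, by omega⟩ with hp_def
    set q : Fin n := ⟨k, by omega⟩ with hq_def
    have hpv : p.val = k - 1 := rfl
    have hqv : q.val = k := rfl
    have htp : tauF g p = q := by
      apply Fin.ext
      rw [tauF_val hgn, hpv, hqv]
      rw [if_pos (by omega)]
      omega
    have htq : tauF g q = p := by
      apply Fin.ext
      rw [tauF_val hgn, hpv, hqv]
      rw [if_pos (by omega)]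
      omega
    have hsp : s p = s q := by
      simp only [hs_def, htp, htq]
      ring
    have hseig' : (UngBar n g).lapMatrix ℝ *ᵥ s = lam • s := by
      funext i
      rw [lap_mulVec]
      have hsum : ∑ j, (if (UngBar n g).Adj i j then s i - s j else 0)
          = ∑ j, (if (Ung n g).Adj i j then s i - s j else 0) := by
        refine Finset.sum_congr rfl fun j _ => ?_
        by_cases hB : (UngBar n g).Adj i j
        · rw [if_pos hB, if_pos (ungbar_le_ung i j hB)]
        · by_cases hU : (Ung n g).Adj i j
          · rw [if_neg hB, if_pos hU]
            rcases pair_of_adj_not_adj hg hng hk i j hU hB with ⟨h1, h2⟩ | ⟨h1, h2⟩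
            · have hip : i = p := Fin.ext (by omega)
              have hjq : j = q := Fin.ext (by omega)
              subst hip; subst hjq
              rw [hsp]; ring
            · have hiq : i = q := Fin.ext (by omega)
              have hjp : j = p := Fin.ext (by omega)
              subst hiq; subst hjp
              rw [hsp]; ring
          · rw [if_neg hB, if_neg hU]
      rw [hsum, ← lap_mulVec, hseig]
    exact le_antisymm (hlam'.2 (mem_spectrum_of_eigvec hs hseig')) hle1
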